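/- For k ≥ 2, the expected value of a random bit in a random binary word of length n avoiding k consecutive 1s converges, as n → ∞, to E_k = (k x^k − k x^{k−1} − x^k + 1)/(k x^k − k x^{k−1} + x^{2k} − 3 x^k + 2) evaluated at x = 1/φ_k, where φ_k is the unique positive root of x^k − x^{k−1} − ⋯ − x − 1. -/

import Mathlib

open Filter Polynomial

def AvoidsOnes (k : ℕ) (w : List Bool) : Prop :=
  ¬ (List.replicate k true <:+: w)

instance (k : ℕ) (w : List Bool) : Decidable (AvoidsOnes k w) :=
  inferInstanceAs (Decidable ¬ _)
/-- Number of binary words of length `n` with no run of `k` ones. -/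
def B (n k : ℕ) : ℕ :=
  (Finset.univ.filter (fun w : Fin n → Bool => AvoidsOnes k (List.ofFn w))).card

/-- Total number of 1s over all such words. -/
def v (n k : ℕ) : ℕ :=
  ∑ w ∈ Finset.univ.filter (fun w : Fin n → Bool => AvoidsOnes k (List.ofFn w)),
    (List.ofFn w).count true


lemma rep_prefix_append {m : ℕ} {L R : List Bool}
    (h : List.replicate m true <+: (L ++ false :: R)) :
    List.replicate m true <+: L := by
  induction m generalizing L with
  | zero => simp
  | succ m ih =>
    rw [List.replicate_succ] at h ⊢
    obtain ⟨t, ht⟩ := h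
    cases L with
    | nil => simp at ht
    | cons a L' =>
      simp only [List.cons_append, List.cons.injEq] at ht
      obtain ⟨ha, ht'⟩ := ht
      have : List.replicate m true <+: L' ++ false :: R := ⟨t, ht'⟩
      obtain ⟨t2, ht2⟩ := ih this
      subst ha
      exact ⟨t2, by rw [List.cons_append, ht2]⟩

lemma rep_infix_split {k : ℕ} (hk : 1 ≤ k) {L R : List Bool} :
    List.replicate k true <:+: (L ++ false :: R) ↔
      List.replicate k true <:+: L ∨ List.replicate k true <:+: R := by
  constructor
  · intro h
    induction L with
    | nil =>
      right
      simp only [List.nil_append] at h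
      rcases List.infix_cons_iff.1 h with h | h
      · exfalso
        obtain ⟨t, ht⟩ := h
        obtain ⟨k', rfl⟩ : ∃ k', k = k' + 1 := ⟨k - 1, by omega⟩
        rw [List.replicate_succ] at ht
        simp at ht
      · exact h
    | cons a L' ih =>
      simp only [List.cons_append] at h
      rcases List.infix_cons_iff.1 h with h | h
      · left
        have h2 := rep_prefix_append (L := a :: L') (R := R) h
        exact h2.isInfix
      · rcases ih h with h | h
        · exact Or.inl (List.infix_cons h)
        · exact Or.inr h
  · rintro (h | h)
    · exact h.trans ((List.prefix_append _ _).isInfix)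
    · exact (List.infix_cons h).trans ((List.suffix_append _ _).isInfix)

lemma avoid_split {k : ℕ} (hk : 1 ≤ k) {L R : List Bool} :
    AvoidsOnes k (L ++ false :: R) ↔ AvoidsOnes k L ∧ AvoidsOnes k R := by
  unfold AvoidsOnes
  rw [rep_infix_split hk]
  tauto

lemma avoid_of_length_lt {k : ℕ} {L : List Bool} (h : L.length < k) :
    AvoidsOnes k L := fun hinf => by
  have := hinf.length_le
  simp at this
  omega
section Count

variable {k : ℕ}

def Gd (k n : ℕ) : Finset (Fin n → Bool) :=
  Finset.univ.filter (fun w => AvoidsOnes k (List.ofFn w))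

lemma B_eq (n : ℕ) : B n k = (Gd k n).card := rfl

lemma mem_Gd {n : ℕ} {w : Fin n → Bool} :
    w ∈ Gd k n ↔ AvoidsOnes k (List.ofFn w) := by
  simp [Gd]

/-- decomposition of a word with a `false` at position `a`. -/
lemma eq_glue {a b : ℕ} (w : Fin (a+(b+1)) → Bool) (hw : w ⟨a, by omega⟩ = false) :
    w = Fin.append (fun i : Fin a => w ⟨i, by omega⟩)
      (Fin.cons false (fun j : Fin b => w ⟨a+1+j, by omega⟩)) := by
  funext t
  by_cases h : (t : ℕ) < a
  · rw [show t = Fin.castAdd (b+1) ⟨t, h⟩ from by ext; simp, Fin.append_left]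
    apply congrArg w
    ext
    simp
  · have h2 : a ≤ (t : ℕ) := le_of_not_gt h
    rw [show t = Fin.natAdd a ⟨(t : ℕ) - a, by omega⟩ from by ext; simp; omega,
      Fin.append_right]
    rcases Nat.eq_zero_or_pos ((t : ℕ) - a) with h3 | h3
    · rw [show (⟨(t : ℕ) - a, by omega⟩ : Fin (b+1)) = 0 from by ext; simp [h3], Fin.cons_zero]
      rw [show (Fin.natAdd a (0 : Fin (b+1)) : Fin (a+(b+1))) = ⟨a, by omega⟩ from by
        ext; simp]
      exact hw
    · rw [show (⟨(t : ℕ) - a, by omega⟩ : Fin (b+1)) = Fin.succ ⟨(t : ℕ) - a - 1, by omega⟩ from by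
        ext; simp; omega, Fin.cons_succ]
      apply congrArg w
      ext
      simp
      omega

lemma ofFn_glue {a b : ℕ} (l : Fin a → Bool) (r : Fin b → Bool) :
    List.ofFn (Fin.append l (Fin.cons false r)) = List.ofFn l ++ false :: List.ofFn r := by
  rw [List.ofFn_fin_append, List.ofFn_cons]

lemma good_glue (hk : 1 ≤ k) {a b : ℕ} (l : Fin a → Bool) (r : Fin b → Bool) :
    AvoidsOnes k (List.ofFn (Fin.append l (Fin.cons false r))) ↔
      AvoidsOnes k (List.ofFn l) ∧ AvoidsOnes k (List.ofFn r) := by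
  rw [ofFn_glue, avoid_split hk]

lemma glue_restrict {a b : ℕ} (l : Fin a → Bool) (r : Fin b → Bool) :
    (fun i : Fin a => Fin.append l (Fin.cons false r) ⟨i, by omega⟩) = l ∧
    (fun j : Fin b => Fin.append l (Fin.cons false r) ⟨a+1+j, by omega⟩) = r := by
  constructor
  · funext x
    rw [show (⟨(x : ℕ), by omega⟩ : Fin (a+(b+1))) = Fin.castAdd (b+1) x from by ext; simp,
      Fin.append_left]
  · funext x
    rw [show (⟨a+1+(x : ℕ), by omega⟩ : Fin (a+(b+1))) = Fin.natAdd a (Fin.succ x) from by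
      ext; simp; omega, Fin.append_right, Fin.cons_succ]

lemma glue_at {a b : ℕ} (l : Fin a → Bool) (r : Fin b → Bool) (ha : a < a + (b+1)) :
    Fin.append l (Fin.cons false r) ⟨a, ha⟩ = false := by
  rw [show (⟨a, ha⟩ : Fin (a+(b+1))) = Fin.natAdd a (0 : Fin (b+1)) from by ext; simp,
    Fin.append_right, Fin.cons_zero]

lemma split_card (hk : 1 ≤ k) (a b n : ℕ) (hn : n = a + (b+1)) (ha : a < n) :
    ((Gd k n).filter (fun w => w ⟨a, ha⟩ = false)).card = B a k * B b k := by
  subst hn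
  rw [B_eq, B_eq, ← Finset.card_product]
  have hi : ∀ w ∈ (Gd k (a+(b+1))).filter (fun w => w ⟨a, ha⟩ = false),
      ((fun i : Fin a => w ⟨i, by omega⟩), (fun j : Fin b => w ⟨a+1+j, by omega⟩))
        ∈ (Gd k a) ×ˢ (Gd k b) := by
    intro w hw
    simp only [Finset.mem_filter] at hw
    obtain ⟨hwg, hwa⟩ := hw
    rw [mem_Gd] at hwg
    rw [eq_glue w hwa, good_glue hk] at hwg
    simp only [Finset.mem_product, mem_Gd]
    exact hwg
  have hj : ∀ p ∈ (Gd k a) ×ˢ (Gd k b),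
      Fin.append p.1 (Fin.cons false p.2)
        ∈ (Gd k (a+(b+1))).filter (fun w => w ⟨a, ha⟩ = false) := by
    intro p hp
    simp only [Finset.mem_product, mem_Gd] at hp
    simp only [Finset.mem_filter, mem_Gd]
    exact ⟨(good_glue hk _ _).2 hp, glue_at _ _ _⟩
  exact Finset.card_bij' _ _ hi hj
    (fun w hw => (eq_glue w (Finset.mem_filter.1 hw).2).symm)
    (fun p hp => Prod.ext (glue_restrict p.1 p.2).1 (glue_restrict p.1 p.2).2)

end Count

section Count2

variable {k : ℕ}

lemma count_bool (l : List Bool) : l.count true + l.count false = l.length := by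
  induction l with
  | nil => simp
  | cons a t ih => cases a <;> simp [List.count_cons] <;> omega

lemma count_ofFn {n : ℕ} (w : Fin n → Bool) (b : Bool) :
    (List.ofFn w).count b = (Finset.univ.filter (fun i => w i = b)).card := by
  induction n with
  | zero => simp
  | succ n ih =>
    rw [List.ofFn_succ, List.count_cons, ih (fun i => w i.succ), Finset.card_filter,
      Finset.card_filter, Fin.sum_univ_succ]
    simp [add_comm]

lemma B_of_lt {n : ℕ} (h : n < k) : B n k = 2 ^ n := by
  unfold B
  rw [Finset.filter_true_of_mem, Finset.card_univ]
  · simp [Fintype.card_fun]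
  · intro w _
    apply avoid_of_length_lt
    simpa using h

lemma B_pos (hk : 1 ≤ k) (n : ℕ) : 0 < B n k := by
  rw [B_eq, Finset.card_pos]
  refine ⟨fun _ => false, mem_Gd.2 ?_⟩
  intro hinf
  have : true ∈ List.ofFn (fun _ : Fin n => false) :=
    hinf.subset (List.mem_replicate.2 ⟨by omega, rfl⟩)
  simp at this

lemma key_identity (hk : 1 ≤ k) (n : ℕ) :
    v n k + ∑ i ∈ Finset.range n, B i k * B (n - 1 - i) k = n * B n k := by
  have hswap : ∑ i ∈ Finset.range n, B i k * B (n - 1 - i) k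
      = ∑ w ∈ Gd k n, (List.ofFn w).count false := by
    have h1 : ∀ w ∈ Gd k n, (List.ofFn w).count false
        = ∑ i : Fin n, if w i = false then 1 else 0 := by
      intro w _
      rw [count_ofFn, Finset.card_filter]
    rw [Finset.sum_congr rfl h1, Finset.sum_comm]
    have h2 : ∀ i : Fin n, (∑ w ∈ Gd k n, if w i = false then 1 else 0)
        = B (i : ℕ) k * B (n - 1 - (i : ℕ)) k := by
      intro i
      rw [← Finset.card_filter]
      exact split_card hk i (n - 1 - (i : ℕ)) n (by omega) i.isLt
    rw [Finset.sum_congr rfl (fun i _ => h2 i), ← Fin.sum_univ_eq_sum_range]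
  rw [hswap]
  have hv : v n k = ∑ w ∈ Gd k n, (List.ofFn w).count true := rfl
  rw [hv, ← Finset.sum_add_distrib]
  have : ∀ w ∈ Gd k n, (List.ofFn w).count true + (List.ofFn w).count false = n := by
    intro w _
    rw [count_bool]
    simp
  rw [Finset.sum_congr rfl this, Finset.sum_const, B_eq, smul_eq_mul, mul_comm]

end Count2

section Rec

variable {k : ℕ}

lemma true_of_lt_indexOf {l : List Bool} {j : ℕ} (hj : j < l.idxOf false)
    (hjl : j < l.length) : l[j] = true := by
  induction l generalizing j with
  | nil => simp at hjl
  | cons a t ih =>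
    cases a with
    | false => simp [List.idxOf_cons_self] at hj
    | true =>
      rw [List.idxOf_cons_ne _ (by simp)] at hj
      cases j with
      | zero => simp
      | succ j =>
        simp only [List.getElem_cons_succ]
        exact ih (by omega) (by simpa using hjl)

lemma indexOf_false_lt {n : ℕ} {w : Fin (n + k) → Bool}
    (hw : AvoidsOnes k (List.ofFn w)) : (List.ofFn w).idxOf false < k := by
  by_contra hge
  push_neg at hge
  apply hw
  have hpre : List.replicate k true <+: List.ofFn w := by
    rw [List.prefix_iff_eq_take]
    apply List.ext_getElem (by simp)
    intro i h1 h2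
    simp only [List.length_replicate] at h1
    rw [List.getElem_replicate, List.getElem_take]
    exact (true_of_lt_indexOf (by omega) (by simp; omega)).symm
  exact hpre.isInfix

lemma indexOf_false_glue {t : ℕ} (s : List Bool) :
    (List.replicate t true ++ false :: s).idxOf false = t := by
  rw [List.idxOf_append_of_notMem (by simp), List.idxOf_cons_self]
  simp

lemma fiber_card (hk : 1 ≤ k) (t b n : ℕ) (hn : n = t + (b + 1)) (htk : t < k) :
    ((Gd k n).filter (fun w => (List.ofFn w).idxOf false = t)).card = B b k := by
  subst hn
  rw [B_eq]
  have hwt : ∀ w ∈ (Gd k (t + (b+1))).filter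
      (fun w => (List.ofFn w).idxOf false = t), w ⟨t, by omega⟩ = false := by
    intro w hw
    rw [Finset.mem_filter] at hw
    obtain ⟨hg, hio⟩ := hw
    have hlt : (List.ofFn w).idxOf false < (List.ofFn w).length := by
      rw [hio]; simp
    have h2 := List.getElem_idxOf hlt
    rw [List.getElem_ofFn] at h2
    have h3 : (⟨t, by omega⟩ : Fin (t+(b+1))) = ⟨(List.ofFn w).idxOf false,
        by simpa only [List.length_ofFn] using hlt⟩ := Fin.ext hio.symm
    rw [h3]
    exact h2
  have htrue : ∀ w ∈ (Gd k (t + (b+1))).filter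
      (fun w => (List.ofFn w).idxOf false = t),
      ∀ s : Fin t, w ⟨s, by omega⟩ = true := by
    intro w hw s
    rw [Finset.mem_filter] at hw
    have := true_of_lt_indexOf (l := List.ofFn w) (j := s)
      (by rw [hw.2]; exact s.isLt) (by have := s.isLt; simp; omega)
    rwa [List.getElem_ofFn] at this
  have hi : ∀ w ∈ (Gd k (t + (b+1))).filter
      (fun w => (List.ofFn w).idxOf false = t),
      (fun j : Fin b => w ⟨t+1+j, by omega⟩) ∈ Gd k b := by
    intro w hw
    have hg := (Finset.mem_filter.1 hw).1
    rw [mem_Gd] at hg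
    rw [eq_glue w (hwt w hw), good_glue hk] at hg
    exact mem_Gd.2 hg.2
  have hj : ∀ r ∈ Gd k b,
      Fin.append (fun _ : Fin t => true) (Fin.cons false r)
        ∈ (Gd k (t + (b+1))).filter (fun w => (List.ofFn w).idxOf false = t) := by
    intro r hr
    rw [Finset.mem_filter, mem_Gd, ofFn_glue, List.ofFn_const]
    refine ⟨?_, indexOf_false_glue _⟩
    rw [avoid_split hk]
    exact ⟨avoid_of_length_lt (by simpa using htk), mem_Gd.1 hr⟩
  refine Finset.card_bij' _ _ hi hj ?_ ?_
  · intro w hw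
    have h2 := eq_glue w (hwt w hw)
    rw [show (fun i : Fin t => w ⟨i, by omega⟩) = (fun _ : Fin t => true) from
      funext (fun s => htrue w hw s)] at h2
    exact h2.symm
  · intro r hr
    exact (glue_restrict (fun _ : Fin t => true) r).2

lemma B_rec (hk : 1 ≤ k) (n : ℕ) : B (n + k) k = ∑ j ∈ Finset.range k, B (n + j) k := by
  rw [B_eq, Finset.card_eq_sum_card_fiberwise
    (f := fun w => (List.ofFn w).idxOf false) (t := Finset.range k)
    (fun w hw => Finset.mem_range.2 (indexOf_false_lt (mem_Gd.1 hw)))]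
  rw [← Finset.sum_range_reflect]
  apply Finset.sum_congr rfl
  intro t ht
  rw [Finset.mem_range] at ht
  exact fiber_card hk (k - 1 - t) (n + t) (n + k) (by omega) (by omega)

end Rec

section Analysis

variable {k : ℕ} {x : ℝ}

-- basic consequences of the root equation
lemma x_lt_one (hk : 2 ≤ k) (hx : 0 < x) (hS : ∑ j ∈ Finset.range k, x ^ (j+1) = 1) :
    x < 1 := by
  by_contra h
  push_neg at h
  have : ∀ j ∈ Finset.range k, (1:ℝ) ≤ x ^ (j+1) := fun j _ => one_le_pow₀ h
  have h2 : (k : ℝ) ≤ ∑ j ∈ Finset.range k, x ^ (j+1) := by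
    calc (k:ℝ) = ∑ j ∈ Finset.range k, 1 := by simp
    _ ≤ _ := Finset.sum_le_sum this
  rw [hS] at h2
  have : (2:ℝ) ≤ k := by exact_mod_cast hk
  linarith

lemma xk1_eq (hk : 2 ≤ k) (hx : 0 < x) (hS : ∑ j ∈ Finset.range k, x ^ (j+1) = 1) :
    x ^ (k+1) = 2*x - 1 := by
  have h1 : x < 1 := x_lt_one hk hx hS
  have hgeom : (∑ j ∈ Finset.range k, x ^ j) * (x - 1) = x ^ k - 1 := geom_sum_mul x k
  have h2 : ∑ j ∈ Finset.range k, x ^ (j+1) = x * ∑ j ∈ Finset.range k, x ^ j := by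
    rw [Finset.mul_sum]
    exact Finset.sum_congr rfl fun j _ => by ring
  rw [h2] at hS
  have hx1 : x - 1 ≠ 0 := by linarith
  -- x * ((x^k - 1)/(x-1)) = 1
  have : x * (x ^ k - 1) = x - 1 := by
    have := congrArg (· * (x - 1)) hS
    rw [mul_assoc, hgeom] at this
    linarith
  have hxk : x ^ (k+1) = x ^ k * x := pow_succ x k
  nlinarith [this, hxk]

end Analysis

section Analysis2

variable (k : ℕ) (x : ℝ)

noncomputable def cc (i : ℕ) : ℝ := ∑ j ∈ Finset.Ico i k, x ^ (j+1)

noncomputable def mu : ℝ := ∑ i ∈ Finset.range k, cc k x i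

noncomputable def HH : ℝ := ∑ j ∈ Finset.range k, cc k x (k-1-j) * (2*x) ^ j

variable {k x}

lemma cc_pos (hx : 0 < x) {i : ℕ} (hi : i < k) : 0 < cc k x i :=
  Finset.sum_pos (fun j _ => pow_pos hx _) (by rw [Finset.nonempty_Ico]; omega)

lemma cc_top : cc k x k = 0 := by simp [cc]

lemma cc_succ {i : ℕ} (hi : i < k) : cc k x i = x ^ (i+1) + cc k x (i+1) := by
  rw [cc, cc, Finset.sum_eq_sum_Ico_succ_bot hi]

lemma cc_zero (hS : ∑ j ∈ Finset.range k, x ^ (j+1) = 1) : cc k x 0 = 1 := by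
  rw [cc]
  rw [show Finset.Ico 0 k = Finset.range k from by ext; simp]
  exact hS

lemma sum_pow_mul (n : ℕ) : (∑ j ∈ Finset.range n, x ^ (j+1)) * (1-x) = x - x^(n+1) := by
  induction n with
  | zero => simp
  | succ n ih =>
    rw [Finset.sum_range_succ, add_mul, ih]
    ring

lemma cc_mul {i : ℕ} (hi : i ≤ k) : cc k x i * (1-x) = x^(i+1) - x^(k+1) := by
  rw [cc, Finset.sum_Ico_eq_sub _ hi, sub_mul, sum_pow_mul, sum_pow_mul]
  ring

lemma mu_pos (hx : 0 < x) (hk : 1 ≤ k) : 0 < mu k x :=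
  Finset.sum_pos (fun i hi => cc_pos hx (Finset.mem_range.1 hi)) (by simp; omega)

lemma mu_mul (hk : 2 ≤ k) (hx : 0 < x) (hS : ∑ j ∈ Finset.range k, x ^ (j+1) = 1) :
    mu k x * (1-x) = 1 + k - 2*k*x := by
  have hxk1 := xk1_eq hk hx hS
  rw [mu, Finset.sum_mul]
  rw [Finset.sum_congr rfl (fun i hi => cc_mul (le_of_lt (Finset.mem_range.1 hi)))]
  rw [Finset.sum_sub_distrib, hS, Finset.sum_const, Finset.card_range, nsmul_eq_mul, hxk1]
  ring

lemma x_mul_HH (hk : 2 ≤ k) (hx : 0 < x) (hS : ∑ j ∈ Finset.range k, x ^ (j+1) = 1) :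
    x * HH k x = 1 := by
  have hxk1 := xk1_eq hk hx hS
  have hx1 : x < 1 := x_lt_one hk hx hS
  have g2 : (∑ j ∈ Finset.range k, (2*x)^j * x^(k-1-j)) * x = (2*x)^k - x^k := by
    have := geom_sum₂_mul (2*x) x k
    rwa [show 2*x - x = x from by ring] at this
  have g1 : (∑ j ∈ Finset.range k, (2*x)^j) * (2*x - 1) = (2*x)^k - 1 := geom_sum_mul _ k
  have key : HH k x * (1-x) = 1 - x^k := by
    have e1 : ∀ j ∈ Finset.range k, (cc k x (k-1-j) * (2*x) ^ j) * (1-x)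
        = (2*x)^j * x^(k-1-j) * x - x^(k+1) * (2*x)^j := by
      intro j hj
      rw [Finset.mem_range] at hj
      have := cc_mul (k := k) (x := x) (i := k-1-j) (by omega)
      rw [show (k-1-j)+1 = (k-1-j)+1 from rfl] at this
      calc (cc k x (k-1-j) * (2*x) ^ j) * (1-x)
          = (cc k x (k-1-j) * (1-x)) * (2*x)^j := by ring
        _ = (x^((k-1-j)+1) - x^(k+1)) * (2*x)^j := by rw [this]
        _ = (x^(k-1-j) * x - x^(k+1)) * (2*x)^j := by rw [pow_succ]
        _ = (2*x)^j * x^(k-1-j) * x - x^(k+1) * (2*x)^j := by ring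
    rw [HH, Finset.sum_mul, Finset.sum_congr rfl e1, Finset.sum_sub_distrib,
      ← Finset.sum_mul, g2, ← Finset.mul_sum]
    have : x^(k+1) * (∑ j ∈ Finset.range k, (2*x)^j) = (2*x)^k - 1 := by
      rw [hxk1, mul_comm, g1]
    rw [this]
    ring
  have h2 : (x * HH k x) * (1-x) = 1 * (1-x) := by
    calc (x * HH k x) * (1-x) = x * (HH k x * (1-x)) := by ring
      _ = x * (1 - x^k) := by rw [key]
      _ = x - x * x^k := by ring
      _ = x - x^(k+1) := by rw [← pow_succ']
      _ = 1 * (1-x) := by rw [hxk1]; ring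
  have : (1:ℝ) - x ≠ 0 := by linarith
  exact mul_right_cancel₀ this h2

end Analysis2

section Conv

variable (k : ℕ) (x : ℝ)

noncomputable def uu (n : ℕ) : ℝ := (B n k : ℝ) * x ^ n

noncomputable def MM (n : ℕ) : ℝ := ⨆ i : Fin k, uu k x (n + i)

noncomputable def mm (n : ℕ) : ℝ := ⨅ i : Fin k, uu k x (n + i)

variable {k x}

lemma uu_pos (hk : 1 ≤ k) (hx : 0 < x) (n : ℕ) : 0 < uu k x n :=
  mul_pos (by exact_mod_cast B_pos hk n) (pow_pos hx n)

lemma uu_rec (hk : 1 ≤ k) (n : ℕ) :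
    uu k x (n + k) = ∑ i ∈ Finset.range k, x^(i+1) * uu k x (n + (k-1-i)) := by
  have hB : (B (n+k) k : ℝ) = ∑ i ∈ Finset.range k, (B (n + (k-1-i)) k : ℝ) := by
    rw_mod_cast [B_rec hk n]
    rw [← Finset.sum_range_reflect (fun j => B (n + j) k) k]
  have : ∀ i ∈ Finset.range k,
      x^(i+1) * uu k x (n + (k-1-i)) = (B (n + (k-1-i)) k : ℝ) * x^(n+k) := by
    intro i hi
    rw [Finset.mem_range] at hi
    rw [uu, show n + k = (n + (k-1-i)) + (i+1) from by omega, pow_add]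
    ring
  rw [Finset.sum_congr rfl this, ← Finset.sum_mul, ← hB, uu]

lemma le_MM (hk : 1 ≤ k) {i : ℕ} (hi : i < k) (n : ℕ) : uu k x (n + i) ≤ MM k x n :=
  le_ciSup (f := fun i : Fin k => uu k x (n + i))
    (Set.Finite.bddAbove (Set.finite_range _)) (⟨i, hi⟩ : Fin k)

lemma mm_le (hk : 1 ≤ k) {i : ℕ} (hi : i < k) (n : ℕ) : mm k x n ≤ uu k x (n + i) :=
  ciInf_le (f := fun i : Fin k => uu k x (n + i))
    (Set.Finite.bddBelow (Set.finite_range _)) (⟨i, hi⟩ : Fin k)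

lemma uu_le_MM (hk : 1 ≤ k) (hx : 0 < x)
    (hS : ∑ j ∈ Finset.range k, x ^ (j+1) = 1) (n : ℕ) :
    ∀ j : ℕ, uu k x (n + j) ≤ MM k x n ∧ mm k x n ≤ uu k x (n + j) := by
  intro j
  induction j using Nat.strong_induction_on with
  | _ j ih =>
    by_cases hj : j < k
    · exact ⟨le_MM hk hj n, mm_le hk hj n⟩
    · push_neg at hj
      have hrw : n + j = (n + (j - k)) + k := by omega
      rw [hrw, uu_rec hk]
      constructor
      · calc ∑ i ∈ Finset.range k, x^(i+1) * uu k x ((n + (j-k)) + (k-1-i))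
            ≤ ∑ i ∈ Finset.range k, x^(i+1) * MM k x n := by
              apply Finset.sum_le_sum
              intro i hi
              apply mul_le_mul_of_nonneg_left _ (le_of_lt (pow_pos hx _))
              have : (n + (j-k)) + (k-1-i) = n + ((j-k) + (k-1-i)) := by omega
              rw [this]
              exact (ih _ (by omega)).1
          _ = MM k x n := by rw [← Finset.sum_mul, hS, one_mul]
      · calc mm k x n = ∑ i ∈ Finset.range k, x^(i+1) * mm k x n := by
              rw [← Finset.sum_mul, hS, one_mul]
          _ ≤ _ := by
              apply Finset.sum_le_sum
              intro i hi
              apply mul_le_mul_of_nonneg_left _ (le_of_lt (pow_pos hx _))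
              have : (n + (j-k)) + (k-1-i) = n + ((j-k) + (k-1-i)) := by omega
              rw [this]
              exact (ih _ (by omega)).2

lemma MM_succ_le (hk : 1 ≤ k) (hx : 0 < x)
    (hS : ∑ j ∈ Finset.range k, x ^ (j+1) = 1) (n : ℕ) : MM k x (n+1) ≤ MM k x n := by
  haveI : Nonempty (Fin k) := Fin.pos_iff_nonempty.mp (by omega)
  apply ciSup_le
  intro i
  have : n + 1 + (i : ℕ) = n + (1 + (i : ℕ)) := by omega
  rw [this]
  exact (uu_le_MM hk hx hS n _).1

lemma mm_le_succ (hk : 1 ≤ k) (hx : 0 < x)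
    (hS : ∑ j ∈ Finset.range k, x ^ (j+1) = 1) (n : ℕ) : mm k x n ≤ mm k x (n+1) := by
  haveI : Nonempty (Fin k) := Fin.pos_iff_nonempty.mp (by omega)
  apply le_ciInf
  intro i
  have : n + 1 + (i : ℕ) = n + (1 + (i : ℕ)) := by omega
  rw [this]
  exact (uu_le_MM hk hx hS n _).2

lemma MM_antitone (hk : 1 ≤ k) (hx : 0 < x)
    (hS : ∑ j ∈ Finset.range k, x ^ (j+1) = 1) : Antitone (MM k x) :=
  antitone_nat_of_succ_le (MM_succ_le hk hx hS)

lemma mm_monotone (hk : 1 ≤ k) (hx : 0 < x)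
    (hS : ∑ j ∈ Finset.range k, x ^ (j+1) = 1) : Monotone (mm k x) :=
  monotone_nat_of_le_succ (mm_le_succ hk hx hS)

lemma mm_le_MM (hk : 1 ≤ k) (hx : 0 < x)
    (hS : ∑ j ∈ Finset.range k, x ^ (j+1) = 1) (n : ℕ) : mm k x n ≤ MM k x n :=
  le_trans (mm_le hk (by omega : 0 < k) n) (le_MM hk (by omega : 0 < k) n)

lemma mm_pos (hk : 1 ≤ k) (hx : 0 < x) (n : ℕ) : 0 < mm k x n := by
  haveI : Nonempty (Fin k) := Fin.pos_iff_nonempty.mp (by omega)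
  obtain ⟨i, hi⟩ := Finite.exists_min (fun i : Fin k => uu k x (n + i))
  have : mm k x n = uu k x (n + i) :=
    le_antisymm (ciInf_le (Set.Finite.bddBelow (Set.finite_range _)) i) (le_ciInf hi)
  rw [this]
  exact uu_pos hk hx _

end Conv

section Conv2

variable {k : ℕ} {x : ℝ}

/-- one-step domination with one special term -/
lemma step_bound (hk : 1 ≤ k) (hx : 0 < x) (hx1 : x < 1)
    (hS : ∑ j ∈ Finset.range k, x ^ (j+1) = 1) (n nT : ℕ) (hn : n ≤ nT)
    {j0 : ℕ} (hj0 : j0 < k) {Y : ℝ}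
    (hY : uu k x (nT + (k-1-j0)) ≤ Y) (hYM : Y ≤ MM k x n) :
    uu k x (nT + k) ≤ x^(j0+1) * Y + (1 - x^(j0+1)) * MM k x n := by
  rw [uu_rec hk]
  have hbound : ∀ i ∈ Finset.range k,
      x^(i+1) * uu k x (nT + (k-1-i))
        ≤ if i = j0 then x^(i+1) * Y else x^(i+1) * MM k x n := by
    intro i hi
    rw [Finset.mem_range] at hi
    by_cases h : i = j0
    · subst h
      rw [if_pos rfl]
      exact mul_le_mul_of_nonneg_left hY (le_of_lt (pow_pos hx _))
    · rw [if_neg h]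
      apply mul_le_mul_of_nonneg_left _ (le_of_lt (pow_pos hx _))
      rw [show nT + (k-1-i) = n + ((nT - n) + (k-1-i)) from by omega]
      exact (uu_le_MM hk hx hS n _).1
  calc ∑ i ∈ Finset.range k, x^(i+1) * uu k x (nT + (k-1-i))
      ≤ ∑ i ∈ Finset.range k, (if i = j0 then x^(i+1) * Y else x^(i+1) * MM k x n) :=
        Finset.sum_le_sum hbound
    _ = x^(j0+1) * Y + (1 - x^(j0+1)) * MM k x n := by
        rw [← Finset.add_sum_erase _ _ (Finset.mem_range.2 hj0), if_pos rfl]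
        congr 1
        have h1 : ∀ i ∈ (Finset.range k).erase j0,
            (if i = j0 then x^(i+1) * Y else x^(i+1) * MM k x n) = x^(i+1) * MM k x n := by
          intro i hi
          rw [if_neg (Finset.ne_of_mem_erase hi)]
        rw [Finset.sum_congr rfl h1, ← Finset.sum_mul]
        have h2 : ∑ i ∈ (Finset.range k).erase j0, x^(i+1)
            = 1 - x^(j0+1) := by
          have := Finset.add_sum_erase _ (fun i => x^(i+1)) (Finset.mem_range.2 hj0)
          rw [hS] at this
          linarith
        rw [h2]

lemma contraction (hk : 1 ≤ k) (hx : 0 < x) (hx1 : x < 1)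
    (hS : ∑ j ∈ Finset.range k, x ^ (j+1) = 1) (n : ℕ) :
    MM k x (n + k) ≤ (x^k)^2 * mm k x n + (1 - (x^k)^2) * MM k x n := by
  haveI : Nonempty (Fin k) := Fin.pos_iff_nonempty.mp (by omega)
  set δ := x^k with hδdef
  have hδ0 : 0 < δ := pow_pos hx k
  have hδ1 : δ < 1 := pow_lt_one₀ (le_of_lt hx) hx1 (by omega)
  have hmM : mm k x n ≤ MM k x n := mm_le_MM hk hx hS n
  -- minimum attained
  obtain ⟨istar, histar⟩ := Finite.exists_min (fun i : Fin k => uu k x (n + i))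
  have hmin : uu k x (n + istar) = mm k x n :=
    (le_antisymm (ciInf_le (f := fun i : Fin k => uu k x (n + i))
      (Set.Finite.bddBelow (Set.finite_range _)) istar)
      (le_ciInf histar)).symm
  have hpge : ∀ j0 : ℕ, j0 < k → δ ≤ x^(j0+1) := fun j0 hj0 =>
    pow_le_pow_of_le_one (le_of_lt hx) (le_of_lt hx1) (by omega)
  -- the two-step bound  
  have key : ∀ s : ℕ, s < k → uu k x (n + k + s) ≤ δ^2 * mm k x n + (1 - δ^2) * MM k x n := by
    intro s hs
    by_cases hcase : s ≤ (istar : ℕ)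
    · -- single step
      have hj0 : k - 1 - ((istar : ℕ) - s) < k := by omega
      have hidx : (n + s) + (k - 1 - (k - 1 - ((istar : ℕ) - s))) = n + (istar : ℕ) := by
        have := istar.isLt
        omega
      have hstep := step_bound hk hx hx1 hS n (n + s) (by omega) hj0
        (Y := mm k x n) (by rw [hidx, hmin]) hmM
      rw [show n + s + k = n + k + s from by omega] at hstep
      refine le_trans hstep ?_
      have hp := hpge _ hj0
      have hp2 : δ^2 ≤ x^(k - 1 - ((istar : ℕ) - s) + 1) := by nlinarith
      nlinarith [mul_nonneg (sub_nonneg.2 hp2) (sub_nonneg.2 hmM)]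
    · -- two steps
      push_neg at hcase
      have hstep1 : uu k x ((n + (istar : ℕ)) + k) ≤ δ * mm k x n + (1 - δ) * MM k x n := by
        have h1 := step_bound hk hx hx1 hS n (n + (istar : ℕ)) (by omega) (by omega : k - 1 < k)
          (Y := mm k x n) (by rw [show n + (istar:ℕ) + (k-1-(k-1)) = n + (istar:ℕ) from by omega,
            hmin]) hmM
        rwa [show k - 1 + 1 = k from by omega, ← hδdef] at h1
      have hj0 : s - (istar : ℕ) - 1 < k := by omega
      have hidx : (n + s) + (k - 1 - (s - (istar : ℕ) - 1)) = (n + (istar : ℕ)) + k := by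
        have := istar.isLt
        omega
      have hYM : δ * mm k x n + (1 - δ) * MM k x n ≤ MM k x n := by nlinarith
      have hstep2 := step_bound hk hx hx1 hS n (n + s) (by omega) hj0
        (Y := δ * mm k x n + (1 - δ) * MM k x n) (by rw [hidx]; exact hstep1) hYM
      rw [show n + s + k = n + k + s from by omega] at hstep2
      refine le_trans hstep2 ?_
      have hp := hpge _ hj0
      have hp2 : δ^2 ≤ x^(s - (istar : ℕ) - 1 + 1) * δ := by nlinarith
      nlinarith [mul_nonneg (sub_nonneg.2 hp2) (sub_nonneg.2 hmM)]
  apply ciSup_le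
  intro i
  exact key i i.isLt

lemma osc_tendsto (hk : 1 ≤ k) (hx : 0 < x) (hx1 : x < 1)
    (hS : ∑ j ∈ Finset.range k, x ^ (j+1) = 1) :
    Filter.Tendsto (fun n => MM k x n - mm k x n) Filter.atTop (nhds 0) := by
  set c := 1 - (x^k)^2 with hc
  have hδ0 : 0 < x^k := pow_pos hx k
  have hδ1 : x^k < 1 := pow_lt_one₀ (le_of_lt hx) hx1 (by omega)
  have hc0 : 0 ≤ c := by nlinarith
  have hc1 : c < 1 := by nlinarith
  have hOanti : Antitone (fun n => MM k x n - mm k x n) := fun a b hab =>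
    sub_le_sub (MM_antitone hk hx hS hab) (mm_monotone hk hx hS hab)
  have hO0 : ∀ n, 0 ≤ MM k x n - mm k x n := fun n => by
    have := mm_le_MM hk hx hS n; linarith
  have hstep : ∀ n, MM k x (n + k) - mm k x (n + k) ≤ c * (MM k x n - mm k x n) := by
    intro n
    have h1 := contraction hk hx hx1 hS n
    have h2 : mm k x n ≤ mm k x (n + k) := mm_monotone hk hx hS (by omega)
    have := mm_le_MM hk hx hS n
    nlinarith
  have hiter : ∀ j, MM k x (j * k) - mm k x (j * k)
      ≤ c^j * (MM k x 0 - mm k x 0) := by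
    intro j
    induction j with
    | zero => simp
    | succ j ih =>
      have : (j+1) * k = j * k + k := by ring
      rw [this]
      calc MM k x (j * k + k) - mm k x (j * k + k)
          ≤ c * (MM k x (j*k) - mm k x (j*k)) := hstep _
        _ ≤ c * (c^j * (MM k x 0 - mm k x 0)) := by
            apply mul_le_mul_of_nonneg_left ih hc0
        _ = c^(j+1) * (MM k x 0 - mm k x 0) := by ring
  have hub : ∀ n, MM k x n - mm k x n ≤ c^(n / k) * (MM k x 0 - mm k x 0) := by
    intro n
    calc MM k x n - mm k x n ≤ MM k x ((n/k) * k) - mm k x ((n/k)*k) :=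
          hOanti (by exact Nat.div_mul_le_self n k)
      _ ≤ _ := hiter _
  have hdiv : Filter.Tendsto (fun n : ℕ => n / k) Filter.atTop Filter.atTop := by
    apply Filter.tendsto_atTop.2
    intro b
    rw [Filter.eventually_atTop]
    exact ⟨b * k, fun n hn => (Nat.le_div_iff_mul_le (by omega)).2 hn⟩
  have hpow : Filter.Tendsto (fun n : ℕ => c^(n/k) * (MM k x 0 - mm k x 0))
      Filter.atTop (nhds 0) := by
    have h1 : Filter.Tendsto (fun j : ℕ => c^j) Filter.atTop (nhds 0) :=
      tendsto_pow_atTop_nhds_zero_of_lt_one hc0 hc1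
    have h2 := (h1.comp hdiv).mul_const (MM k x 0 - mm k x 0)
    simpa using h2
  exact tendsto_of_tendsto_of_tendsto_of_le_of_le tendsto_const_nhds hpow
    (fun n => hO0 n) (fun n => hub n)

end Conv2

section Conv3

variable {k : ℕ} {x : ℝ}

lemma uu_tendsto (hk : 2 ≤ k) (hx : 0 < x)
    (hS : ∑ j ∈ Finset.range k, x ^ (j+1) = 1) :
    ∃ L : ℝ, 0 < L ∧ Filter.Tendsto (uu k x) Filter.atTop (nhds L)
      ∧ mu k x * L = HH k x := by
  have hk1 : 1 ≤ k := by omega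
  have hx1 : x < 1 := x_lt_one hk hx hS
  -- MM converges
  have hbdd : BddBelow (Set.range (MM k x)) := by
    refine ⟨mm k x 0, ?_⟩
    rintro y ⟨n, rfl⟩
    exact le_trans (mm_monotone hk1 hx hS (Nat.zero_le n)) (mm_le_MM hk1 hx hS n)
  have hMtend : Filter.Tendsto (MM k x) Filter.atTop (nhds (⨅ n, MM k x n)) :=
    tendsto_atTop_ciInf (MM_antitone hk1 hx hS) hbdd
  set L := ⨅ n, MM k x n with hL
  have hmtend : Filter.Tendsto (mm k x) Filter.atTop (nhds L) := by
    have h1 := hMtend.sub (osc_tendsto hk1 hx hx1 hS)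
    simp only [sub_zero] at h1
    convert h1 using 2 with n
    ring
  have hutend : Filter.Tendsto (uu k x) Filter.atTop (nhds L) := by
    apply tendsto_of_tendsto_of_tendsto_of_le_of_le hmtend hMtend
    · intro n
      have := (uu_le_MM hk1 hx hS n 0).2
      simpa using this
    · intro n
      have := (uu_le_MM hk1 hx hS n 0).1
      simpa using this
  have hLpos : 0 < L := by
    have h1 : mm k x 0 ≤ L := by
      apply ge_of_tendsto hmtend
      filter_upwards with n
      exact mm_monotone hk1 hx hS (Nat.zero_le n)
    exact lt_of_lt_of_le (mm_pos hk1 hx 0) h1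
  refine ⟨L, hLpos, hutend, ?_⟩
  -- the conserved quantity
  set HHn : ℕ → ℝ := fun n => ∑ j ∈ Finset.range k, cc k x (k-1-j) * uu k x (n+j) with hHHn
  have hconst : ∀ n, HHn (n+1) = HHn n := by
    intro n
    set g : ℕ → ℝ := fun j => cc k x (k-j) * uu k x (n+j) with hg
    have e1 : HHn (n+1) = ∑ j ∈ Finset.range k, g (j+1) := by
      apply Finset.sum_congr rfl
      intro j hj
      rw [Finset.mem_range] at hj
      simp only [hg]
      rw [show k - (j+1) = k - 1 - j from by omega, show n + 1 + j = n + (j+1) from by omega]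
    have e2 : ∑ j ∈ Finset.range k, g (j+1)
        = (∑ j ∈ Finset.range k, g j) + g k - g 0 := by
      have := Finset.sum_range_succ' g k
      rw [Finset.sum_range_succ] at this
      linarith
    have e3 : g 0 = 0 := by simp [hg, cc_top]
    have e4 : g k = uu k x (n+k) := by simp [hg, cc_zero hS]
    have e5 : ∀ j ∈ Finset.range k, g j
        = cc k x (k-1-j) * uu k x (n+j) - x^(k-j) * uu k x (n+j) := by
      intro j hj
      rw [Finset.mem_range] at hj
      have := cc_succ (k := k) (x := x) (i := k-1-j) (by omega)
      rw [show k-1-j+1 = k-j from by omega] at this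
      simp only [hg]
      rw [show (k : ℕ) - j = k-1-j+1 from by omega, this]
      rw [show k - 1 - j + 1 = k - j from by omega]
      ring
    have e6 : uu k x (n+k) = ∑ j ∈ Finset.range k, x^(k-j) * uu k x (n+j) := by
      rw [uu_rec hk1]
      rw [← Finset.sum_range_reflect (fun j => x^(k-j) * uu k x (n+j)) k]
      apply Finset.sum_congr rfl
      intro i hi
      rw [Finset.mem_range] at hi
      rw [show k - (k-1-i) = i+1 from by omega]
    rw [e1, e2, e3, e4, Finset.sum_congr rfl e5, Finset.sum_sub_distrib, e6]
    simp only [hHHn]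
    ring
  have hHHconst : ∀ n, HHn n = HHn 0 := by
    intro n
    induction n with
    | zero => rfl
    | succ n ih => rw [hconst n, ih]
  -- limit of HHn
  have hHHtend : Filter.Tendsto HHn Filter.atTop (nhds (mu k x * L)) := by
    have : ∀ j ∈ Finset.range k, Filter.Tendsto (fun n => cc k x (k-1-j) * uu k x (n+j))
        Filter.atTop (nhds (cc k x (k-1-j) * L)) := by
      intro j _
      exact (hutend.comp (Filter.tendsto_add_atTop_nat j)).const_mul _
    have h2 := tendsto_finset_sum (Finset.range k) this
    have h3 : ∑ j ∈ Finset.range k, cc k x (k-1-j) * L = mu k x * L := by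
      rw [← Finset.sum_mul, mu, ← Finset.sum_range_reflect (fun i => cc k x i) k]
    rwa [h3] at h2
  have hHH0 : HHn 0 = HH k x := by
    simp only [hHHn, HH]
    apply Finset.sum_congr rfl
    intro j hj
    rw [Finset.mem_range] at hj
    congr 1
    rw [uu, zero_add, B_of_lt hj]
    push_cast
    rw [mul_pow]
  have : Filter.Tendsto HHn Filter.atTop (nhds (HHn 0)) := by
    rw [show nhds (HHn 0) = nhds (HHn 0) from rfl]
    exact Filter.Tendsto.congr (fun n => (hHHconst n).symm) tendsto_const_nhds
  have := tendsto_nhds_unique hHHtend this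
  rw [← hHH0, this]

end Conv3

section Cesaro

open Filter

lemma cesaro_conv {a : ℕ → ℝ} {A C : ℝ} (hC : ∀ n, |a n| ≤ C)
    (ha : Tendsto a atTop (nhds A)) :
    Tendsto (fun n : ℕ => (n:ℝ)⁻¹ * ∑ i ∈ Finset.range n, a i * a (n-1-i))
      atTop (nhds (A*A)) := by
  set e : ℕ → ℝ := fun n => a n - A with he_def
  have he : Tendsto e atTop (nhds 0) := by
    simpa using ha.sub_const A
  have heabs : Tendsto (fun n => |e n|) atTop (nhds 0) := by
    simpa using he.abs
  have hces1 : Tendsto (fun n : ℕ => (n:ℝ)⁻¹ * ∑ i ∈ Finset.range n, e i)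
      atTop (nhds 0) := he.cesaro
  have hces2 : Tendsto (fun n : ℕ => (n:ℝ)⁻¹ * ∑ i ∈ Finset.range n, |e i|)
      atTop (nhds 0) := heabs.cesaro
  have hCe : ∀ n, |e n| ≤ C + |A| := by
    intro n
    have h1 := hC n
    calc |e n| = |a n + (-A)| := by simp [he_def, sub_eq_add_neg]
      _ ≤ |a n| + |(-A)| := abs_add_le _ _
      _ ≤ C + |A| := by rw [abs_neg]; linarith
  have hCA : 0 ≤ C + |A| := le_trans (abs_nonneg _) (hCe 0)
  have hcross : Tendsto (fun n : ℕ => (n:ℝ)⁻¹ * ∑ i ∈ Finset.range n, e i * e (n-1-i))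
      atTop (nhds 0) := by
    have hg : Tendsto (fun n : ℕ => (C + |A|) * ((n:ℝ)⁻¹ * ∑ i ∈ Finset.range n, |e i|))
        atTop (nhds 0) := by simpa using hces2.const_mul (C + |A|)
    have habs : ∀ n : ℕ, |(n:ℝ)⁻¹ * ∑ i ∈ Finset.range n, e i * e (n-1-i)|
        ≤ (C + |A|) * ((n:ℝ)⁻¹ * ∑ i ∈ Finset.range n, |e i|) := by
      intro n
      rw [abs_mul, abs_inv, Nat.abs_cast]
      have h1 : |∑ i ∈ Finset.range n, e i * e (n-1-i)|
          ≤ ∑ i ∈ Finset.range n, |e i| * (C + |A|) := by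
        refine le_trans (Finset.abs_sum_le_sum_abs _ _) (Finset.sum_le_sum ?_)
        intro i _
        rw [abs_mul]
        exact mul_le_mul_of_nonneg_left (hCe _) (abs_nonneg _)
      calc ((n:ℝ))⁻¹ * |∑ i ∈ Finset.range n, e i * e (n-1-i)|
          ≤ ((n:ℝ))⁻¹ * ∑ i ∈ Finset.range n, |e i| * (C + |A|) := by
            apply mul_le_mul_of_nonneg_left h1 (by positivity)
        _ = (C + |A|) * (((n:ℝ))⁻¹ * ∑ i ∈ Finset.range n, |e i|) := by
            rw [← Finset.sum_mul]; ring
    apply tendsto_of_tendsto_of_tendsto_of_le_of_le (by simpa using hg.neg) hg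
    · intro n
      have := (abs_le.1 (habs n)).1
      linarith
    · intro n
      exact (abs_le.1 (habs n)).2
  have hone : Tendsto (fun n : ℕ => (n:ℝ)⁻¹ * (n:ℝ)) atTop (nhds 1) := by
    have heq : (fun _ : ℕ => (1:ℝ)) =ᶠ[atTop] fun n : ℕ => (n:ℝ)⁻¹ * (n:ℝ) := by
      filter_upwards [eventually_ge_atTop 1] with n hn
      have : (n:ℝ) ≠ 0 := by positivity
      field_simp
    exact Tendsto.congr' heq tendsto_const_nhds
  have hdecomp : ∀ n : ℕ, (n:ℝ)⁻¹ * ∑ i ∈ Finset.range n, a i * a (n-1-i)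
      = A*A*((n:ℝ)⁻¹ * (n:ℝ)) + A*((n:ℝ)⁻¹ * ∑ i ∈ Finset.range n, e i)
        + A*((n:ℝ)⁻¹ * ∑ i ∈ Finset.range n, e i)
        + (n:ℝ)⁻¹ * ∑ i ∈ Finset.range n, e i * e (n-1-i) := by
    intro n
    have hr : ∑ i ∈ Finset.range n, e (n-1-i) = ∑ i ∈ Finset.range n, e i :=
      Finset.sum_range_reflect e n
    have hexp : ∑ i ∈ Finset.range n, a i * a (n-1-i)
        = ∑ i ∈ Finset.range n, (A*A + A * e i + A * e (n-1-i) + e i * e (n-1-i)) := by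
      apply Finset.sum_congr rfl
      intro i _
      simp only [he_def]
      ring
    rw [hexp, Finset.sum_add_distrib, Finset.sum_add_distrib, Finset.sum_add_distrib,
      Finset.sum_const, Finset.card_range, ← Finset.mul_sum, ← Finset.mul_sum, hr,
      nsmul_eq_mul]
    ring
  have := (((hone.const_mul (A*A)).add (hces1.const_mul A)).add
    (hces1.const_mul A)).add hcross
  simp only [mul_zero, add_zero, mul_one] at this
  exact Tendsto.congr (fun n => (hdecomp n).symm) this

end Cesaro

theorem expected_bit_limit (k : ℕ) (hk : 2 ≤ k) (φ : ℝ) (hφ : 0 < φ)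
    (hroot : ((X : ℝ[X]) ^ k - ∑ i ∈ Finset.range k, X ^ i).eval φ = 0) :
    Tendsto (fun n : ℕ => (v n k : ℝ) / (n * B n k)) atTop
      (nhds ((k * (1 / φ) ^ k - k * (1 / φ) ^ (k - 1) - (1 / φ) ^ k + 1) /
        (k * (1 / φ) ^ k - k * (1 / φ) ^ (k - 1) + (1 / φ) ^ (2 * k)
          - 3 * (1 / φ) ^ k + 2))) := by
  have hk1 : 1 ≤ k := by omega
  have hφne : φ ≠ 0 := ne_of_gt hφ
  set x : ℝ := 1/φ with hxdef
  have hx : 0 < x := by positivity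
  have hxφ : x * φ = 1 := by rw [hxdef, one_div, inv_mul_cancel₀ hφne]
  have hev : φ^k = ∑ i ∈ Finset.range k, φ^i := by
    have h := hroot
    simp only [Polynomial.eval_sub, Polynomial.eval_pow, Polynomial.eval_X,
      Polynomial.eval_finset_sum] at h
    linarith [h]
  have hpow1 : ∀ i : ℕ, x^i * φ^i = 1 := fun i => by rw [← mul_pow, hxφ, one_pow]
  have hS : ∑ j ∈ Finset.range k, x^(j+1) = 1 := by
    have h1 : ∀ j ∈ Finset.range k, x^((k-1-j)+1) = x^k * φ^j := by
      intro j hj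
      rw [Finset.mem_range] at hj
      have h2 : x^(k-j) * (x^j * φ^j) = x^k * φ^j := by
        rw [← mul_assoc, ← pow_add, show k-j+j = k from by omega]
      rw [show (k-1-j)+1 = k-j from by omega, ← h2, hpow1, mul_one]
    calc ∑ j ∈ Finset.range k, x^(j+1)
        = ∑ j ∈ Finset.range k, x^((k-1-j)+1) :=
          (Finset.sum_range_reflect (fun j => x^(j+1)) k).symm
      _ = ∑ j ∈ Finset.range k, x^k * φ^j := Finset.sum_congr rfl h1
      _ = x^k * φ^k := by rw [← Finset.mul_sum, ← hev]
      _ = 1 := hpow1 k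
  have hx1 : x < 1 := x_lt_one hk hx hS
  have hxk1 : x^(k+1) = 2*x - 1 := xk1_eq hk hx hS
  obtain ⟨L, hLpos, hutend, hmuL⟩ := uu_tendsto hk hx hS
  have hmu : 0 < mu k x := mu_pos hx hk1
  have hxHH := x_mul_HH hk hx hS
  have hxLmu : x * L * mu k x = 1 := by
    calc x * L * mu k x = x * (mu k x * L) := by ring
      _ = x * HH k x := by rw [hmuL]
      _ = 1 := hxHH
  have hD : mu k x * (1 - x) = 1 + k - 2*k*x := mu_mul hk hx hS
  have hDpos : 0 < 1 + (k:ℝ) - 2*k*x := by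
    rw [← hD]; exact mul_pos hmu (by linarith)
  have hxL : x * L = (1 - x)/(1 + k - 2*k*x) := by
    rw [eq_div_iff (ne_of_gt hDpos), ← hD]
    calc x*L*(mu k x * (1-x)) = (x*L*mu k x) * (1-x) := by ring
      _ = 1 - x := by rw [hxLmu]; ring
  -- Cesàro convergence of the normalized convolution
  have hC : ∀ n, |uu k x n| ≤ MM k x 0 := by
    intro n
    rw [abs_of_pos (uu_pos hk1 hx n)]
    have := (uu_le_MM hk1 hx hS 0 n).1
    simpa using this
  have hconv := cesaro_conv hC hutend
  have hq : Tendsto (fun n : ℕ =>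
      x * ((n:ℝ)⁻¹ * ∑ i ∈ Finset.range n, uu k x i * uu k x (n-1-i)) / uu k x n)
      atTop (nhds (x * (L*L) / L)) := (hconv.const_mul x).div hutend (ne_of_gt hLpos)
  have hval : x * (L*L)/L = x * L := by
    rw [mul_div_assoc, mul_self_div_self]
  rw [hval] at hq
  have hev2 : (fun n : ℕ => (v n k : ℝ) / (n * B n k)) =ᶠ[atTop] (fun n : ℕ =>
      1 - x * ((n:ℝ)⁻¹ * ∑ i ∈ Finset.range n, uu k x i * uu k x (n-1-i)) / uu k x n) := by
    filter_upwards [eventually_ge_atTop 1] with n hn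
    have hBpos : (0:ℝ) < (B n k : ℝ) := by exact_mod_cast B_pos hk1 n
    have hnpos : (0:ℝ) < (n:ℝ) := by exact_mod_cast hn
    have hkey : (v n k : ℝ) + ∑ i ∈ Finset.range n, (B i k : ℝ) * (B (n-1-i) k : ℝ)
        = n * B n k := by
      have h := key_identity hk1 n
      have h2 := congrArg (fun t : ℕ => (t:ℝ)) h
      push_cast at h2
      linarith [h2]
    have hsum : ∑ i ∈ Finset.range n, uu k x i * uu k x (n-1-i)
        = x^(n-1) * ∑ i ∈ Finset.range n, (B i k : ℝ) * (B (n-1-i) k : ℝ) := by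
      rw [Finset.mul_sum]
      apply Finset.sum_congr rfl
      intro i hi
      rw [Finset.mem_range] at hi
      rw [uu, uu, show x^(n-1) = x^i * x^(n-1-i) from by
        rw [← pow_add]; congr 1; omega]
      ring
    show _ = 1 - x * ((n:ℝ)⁻¹ * ∑ i ∈ Finset.range n, uu k x i * uu k x (n-1-i)) / uu k x n
    rw [hsum, uu]
    set S := ∑ i ∈ Finset.range n, (B i k : ℝ) * (B (n-1-i) k : ℝ) with hSdef
    have hxn : x^n = x * x^(n-1) := by
      rw [← pow_succ']; congr 1; omega
    have hxne : x ≠ 0 := ne_of_gt hx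
    have hxpowne : x^(n-1) ≠ 0 := pow_ne_zero _ hxne
    have hq_eq : x * ((n:ℝ)⁻¹ * (x^(n-1) * S)) / ((B n k : ℝ) * x^n) = S / (n * B n k) := by
      rw [hxn]
      field_simp
    rw [hq_eq]
    have hv : (v n k : ℝ) = n * B n k - S := by linarith [hkey]
    rw [hv]
    field_simp
  have hmain := Tendsto.congr' hev2.symm ((tendsto_const_nhds (x := (1:ℝ))).sub hq)
  -- identify the limit value
  have e1 : x^k * x^2 = (2*x-1)*x := by
    rw [← pow_add, show k+2 = (k+1)+1 from rfl, pow_succ, hxk1]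
  have e2 : x^(k-1) * x^2 = 2*x-1 := by
    rw [← pow_add, show k-1+2 = k+1 from by omega, hxk1]
  have e4 : x^(2*k) * x^2 = (2*x-1)^2 := by
    rw [← pow_add, show 2*k+2 = (k+1)*2 from by omega, pow_mul, hxk1]
  have hnum : ((k:ℝ) * x^k - k * x^(k-1) - x^k + 1) * x^2 = (1-x)*((k:ℝ) + x - 2*k*x) := by
    linear_combination ((k:ℝ)-1)*e1 - (k:ℝ)*e2
  have hden : ((k:ℝ) * x^k - k * x^(k-1) + x^(2*k) - 3*x^k + 2) * x^2
      = (1-x)*(1 + (k:ℝ) - 2*k*x) := by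
    linear_combination ((k:ℝ)-3)*e1 - (k:ℝ)*e2 + e4
  have hx2 : x^2 ≠ 0 := pow_ne_zero _ (ne_of_gt hx)
  have hdenne : ((k:ℝ) * x^k - k * x^(k-1) + x^(2*k) - 3*x^k + 2) ≠ 0 := by
    intro h0
    rw [h0, zero_mul] at hden
    nlinarith
  have hfin : ((k:ℝ) * x^k - k * x^(k-1) - x^k + 1) /
      ((k:ℝ) * x^k - k * x^(k-1) + x^(2*k) - 3*x^k + 2) = 1 - x * L := by
    rw [div_eq_iff hdenne, hxL]
    apply mul_right_cancel₀ hx2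
    rw [hnum]
    conv_rhs => rw [mul_assoc, hden]
    have hDne : (1 + (k:ℝ) - 2*k*x) ≠ 0 := ne_of_gt hDpos
    rw [one_sub_div hDne, div_mul_eq_mul_div, eq_div_iff hDne]
    ring
  rw [hfin]
  exact hmain
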